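/- arXiv:quant-ph/0407152 — 3 statements merged into one kernel-verified Lean document; each statement's English description precedes it below -/
import Mathlib

section
/- Let ξ_1, ..., ξ_m be nonzero vectors in ℂ^D whose span is all of ℂ^D, so that N := Σ_{i=1}^m ξ_i ξ_i† is a positive definite matrix. Define the Pretty Good Measurement elements M_i := N^{-1/2} ξ_i ξ_i† N^{-1/2}, where N^{-1/2} is the inverse of the positive definite square root of N. Then for every index i, ⟨ξ_i, M_i ξ_i⟩ / ‖ξ_i‖² ≥ 1 - Σ_{j ≠ i} |⟨ξ_i, ξ_j⟩|² / ‖ξ_i‖⁴. -/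
open Matrix
open scoped InnerProductSpace ComplexOrder MatrixOrder

/-- The outer product `v v†` of a vector `v ∈ ℂ^D`, as the matrix sending `w` to `⟨v, w⟩ v`. -/
noncomputable def outer {D : ℕ} (v : EuclideanSpace ℂ (Fin D)) : Matrix (Fin D) (Fin D) ℂ :=
  Matrix.of fun a b => v a * (starRingEnd ℂ) (v b)

/-- Reinterpret a plain function as an element of Euclidean space. -/
def ev {D : ℕ} (w : Fin D → ℂ) : EuclideanSpace ℂ (Fin D) := WithLp.toLp 2 w

lemma outer_mulVec {D : ℕ} (w : EuclideanSpace ℂ (Fin D)) (u : Fin D → ℂ) :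
    outer w *ᵥ u = (star (w : Fin D → ℂ) ⬝ᵥ u) • (w : Fin D → ℂ) := by
  ext a
  have hra : ((star (w : Fin D → ℂ) ⬝ᵥ u) • (w : Fin D → ℂ)) a
      = (star (w : Fin D → ℂ) ⬝ᵥ u) * w a := rfl
  rw [hra]
  simp only [outer, mulVec, dotProduct, of_apply, Finset.sum_mul, Pi.star_apply,
    Complex.star_def]
  apply Finset.sum_congr rfl
  intro b _
  ring

lemma inner_ev_dot {D : ℕ} (x y : Fin D → ℂ) :
    ⟪ev x, ev y⟫_ℂ = star x ⬝ᵥ y :=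
  (EuclideanSpace.inner_toLp_toLp x y).trans (dotProduct_comm _ _)

lemma herm_move {D : ℕ} (A : Matrix (Fin D) (Fin D) ℂ) (hA : Aᴴ = A)
    (x y : Fin D → ℂ) : star x ⬝ᵥ (A *ᵥ y) = star (A *ᵥ x) ⬝ᵥ y := by
  rw [star_mulVec, hA, dotProduct_mulVec]

lemma dot_sum {D m : ℕ} (x : Fin D → ℂ) (f : Fin m → Fin D → ℂ) :
    x ⬝ᵥ (∑ j, f j) = ∑ j, x ⬝ᵥ f j := by
  simp only [dotProduct, Finset.sum_apply, Finset.mul_sum]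
  exact Finset.sum_comm

lemma matrix_sum_mulVec {D m : ℕ} (A : Fin m → Matrix (Fin D) (Fin D) ℂ) (v : Fin D → ℂ) :
    (∑ j, A j) *ᵥ v = ∑ j, A j *ᵥ v := by
  ext a
  simp only [mulVec, dotProduct, Finset.sum_apply, Matrix.sum_apply, Finset.sum_mul]
  exact Finset.sum_comm

set_option maxHeartbeats 1000000 in
/-- Success bound for the Pretty Good Measurement on the subnormalized ensemble
`{ξ_i}`: with `N = Σ ξ_i ξ_i†` positive definite and `M_i = N^{-1/2} ξ_i ξ_i† N^{-1/2}`,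
one has `⟨ξ_i, M_i ξ_i⟩/‖ξ_i‖² ≥ 1 - Σ_{j ≠ i} |⟨ξ_i, ξ_j⟩|²/‖ξ_i‖⁴` for every `i`. -/
theorem pgm_success_bound
    (D m : ℕ) (ξ : Fin m → EuclideanSpace ℂ (Fin D))
    (hne : ∀ i, ξ i ≠ 0)
    (hspan : Submodule.span ℂ (Set.range ξ) = ⊤)
    (N : Matrix (Fin D) (Fin D) ℂ) (hN : N = ∑ i, outer (ξ i))
    (hNpd : N.PosDef)
    (M : Fin m → Matrix (Fin D) (Fin D) ℂ)
    (hM : ∀ i, M i = (CFC.sqrt N)⁻¹ * outer (ξ i) * (CFC.sqrt N)⁻¹) :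
    ∀ i, (⟪ξ i, (WithLp.toLp 2 ((M i).mulVec (ξ i)) : EuclideanSpace ℂ (Fin D))⟫_ℂ).re / ‖ξ i‖ ^ 2 ≥
      1 - (∑ j ∈ Finset.univ.erase i, ‖⟪ξ i, ξ j⟫_ℂ‖ ^ 2) / ‖ξ i‖ ^ 4 := by
  intro i
  set S : Matrix (Fin D) (Fin D) ℂ := CFC.sqrt N with hSdef
  have hS : S.PosSemidef := (CFC.sqrt_nonneg N).posSemidef
  have hSS : S * S = N := CFC.sqrt_mul_sqrt_self N hNpd.posSemidef.nonneg
  have hdetS : IsUnit S.det := by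
    have h1 : IsUnit N.det := (Matrix.isUnit_iff_isUnit_det N).mp hNpd.isUnit
    rw [← hSS, det_mul] at h1
    exact isUnit_of_mul_isUnit_left h1
  set T : Matrix (Fin D) (Fin D) ℂ := CFC.sqrt S with hTdef
  have hT : T.PosSemidef := (CFC.sqrt_nonneg S).posSemidef
  have hTT : T * T = S := CFC.sqrt_mul_sqrt_self S hS.nonneg
  have hdetT : IsUnit T.det := by
    have h1 := hdetS
    rw [← hTT, det_mul] at h1
    exact isUnit_of_mul_isUnit_left h1
  have hSiH : (S⁻¹)ᴴ = S⁻¹ := hS.isHermitian.inv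
  have hTiH : (T⁻¹)ᴴ = T⁻¹ := hT.isHermitian.inv
  have hTH : Tᴴ = T := hT.isHermitian
  have hSinv : S⁻¹ = T⁻¹ * T⁻¹ := by rw [← hTT, Matrix.mul_inv_rev]
  -- real quantities
  set n : ℝ := ‖ξ i‖ with hn
  set p : ℝ := ‖ev (T⁻¹ *ᵥ (ξ i : Fin D → ℂ))‖ with hp
  set q : ℝ := ‖ev (T *ᵥ (ξ i : Fin D → ℂ))‖ with hq
  set r : ℝ := ‖ev (S *ᵥ (ξ i : Fin D → ℂ))‖ with hr
  have hnpos : 0 < n := by rw [hn]; exact norm_pos_iff.mpr (hne i)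
  have hppos : 0 ≤ p := norm_nonneg _
  have hqpos : 0 ≤ q := norm_nonneg _
  have hrpos : 0 ≤ r := norm_nonneg _
  -- the PGM success amplitude
  have hamp : star ((ξ i : Fin D → ℂ)) ⬝ᵥ (S⁻¹ *ᵥ (ξ i : Fin D → ℂ)) = (p : ℂ) ^ 2 := by
    have h1 : star ((ξ i : Fin D → ℂ)) ⬝ᵥ (S⁻¹ *ᵥ (ξ i : Fin D → ℂ))
        = star (T⁻¹ *ᵥ (ξ i : Fin D → ℂ)) ⬝ᵥ (T⁻¹ *ᵥ (ξ i : Fin D → ℂ)) := by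
      rw [hSinv, ← Matrix.mulVec_mulVec, herm_move _ hTiH]
    rw [h1, ← inner_ev_dot, inner_self_eq_norm_sq_to_K, hp]
    rfl
  have hMval : (⟪ξ i, (WithLp.toLp 2 ((M i).mulVec (ξ i)) : EuclideanSpace ℂ (Fin D))⟫_ℂ).re = p ^ 4 := by
    have hdot : (⟪ξ i, (WithLp.toLp 2 ((M i).mulVec (ξ i)) : EuclideanSpace ℂ (Fin D))⟫_ℂ)
        = star ((ξ i : Fin D → ℂ)) ⬝ᵥ ((M i) *ᵥ (ξ i : Fin D → ℂ)) := inner_ev_dot _ _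
    rw [hdot, hM i]
    have h2 : ((S⁻¹ * outer (ξ i) * S⁻¹) *ᵥ (ξ i : Fin D → ℂ))
        = S⁻¹ *ᵥ (outer (ξ i) *ᵥ (S⁻¹ *ᵥ (ξ i : Fin D → ℂ))) := by
      rw [Matrix.mulVec_mulVec, Matrix.mulVec_mulVec]
    rw [h2, outer_mulVec, Matrix.mulVec_smul, dotProduct_smul, hamp, smul_eq_mul]
    simp only [← Complex.ofReal_pow, ← Complex.ofReal_mul, Complex.ofReal_re]
    ring
  -- Cauchy–Schwarz 1 : n² ≤ p q
  have hcs1 : n ^ 2 ≤ p * q := by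
    have h1 : star (T⁻¹ *ᵥ (ξ i : Fin D → ℂ)) ⬝ᵥ (T *ᵥ (ξ i : Fin D → ℂ))
        = star ((ξ i : Fin D → ℂ)) ⬝ᵥ (ξ i : Fin D → ℂ) := by
      rw [← herm_move _ hTiH, Matrix.mulVec_mulVec, Matrix.nonsing_inv_mul _ hdetT,
        Matrix.one_mulVec]
    have h2 : (⟪ev (T⁻¹ *ᵥ (ξ i : Fin D → ℂ)), ev (T *ᵥ (ξ i : Fin D → ℂ))⟫_ℂ)
        = ((n : ℂ)) ^ 2 := by
      have h3 : (⟪ξ i, ξ i⟫_ℂ) = ((n : ℂ)) ^ 2 := by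
        rw [inner_self_eq_norm_sq_to_K, hn]; rfl
      rw [inner_ev_dot, h1, ← h3]; exact (inner_ev_dot _ _).symm
    calc n ^ 2 = (((n:ℂ))^2).re := by rw [← Complex.ofReal_pow, Complex.ofReal_re]
    _ = (⟪ev (T⁻¹ *ᵥ (ξ i : Fin D → ℂ)), ev (T *ᵥ (ξ i : Fin D → ℂ))⟫_ℂ).re := by rw [h2]
    _ ≤ ‖(⟪ev (T⁻¹ *ᵥ (ξ i : Fin D → ℂ)), ev (T *ᵥ (ξ i : Fin D → ℂ))⟫_ℂ)‖ :=
      Complex.re_le_norm _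
    _ ≤ p * q := norm_inner_le_norm _ _
  -- Cauchy–Schwarz 2 : q² ≤ n r
  have hcs2 : q ^ 2 ≤ n * r := by
    have h1 : star ((ξ i : Fin D → ℂ)) ⬝ᵥ (S *ᵥ (ξ i : Fin D → ℂ))
        = star (T *ᵥ (ξ i : Fin D → ℂ)) ⬝ᵥ (T *ᵥ (ξ i : Fin D → ℂ)) := by
      rw [← hTT, ← Matrix.mulVec_mulVec, herm_move _ hTH]
    have h2 : (⟪ev ((ξ i : Fin D → ℂ)), ev (S *ᵥ (ξ i : Fin D → ℂ))⟫_ℂ) = ((q:ℂ))^2 := by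
      rw [inner_ev_dot, h1, ← inner_ev_dot, inner_self_eq_norm_sq_to_K, hq]; rfl
    calc q ^ 2 = (((q:ℂ))^2).re := by rw [← Complex.ofReal_pow, Complex.ofReal_re]
    _ = (⟪ev ((ξ i : Fin D → ℂ)), ev (S *ᵥ (ξ i : Fin D → ℂ))⟫_ℂ).re := by rw [h2]
    _ ≤ ‖(⟪ev ((ξ i : Fin D → ℂ)), ev (S *ᵥ (ξ i : Fin D → ℂ))⟫_ℂ)‖ := Complex.re_le_norm _
    _ ≤ ‖ev ((ξ i : Fin D → ℂ))‖ * r := norm_inner_le_norm _ _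
    _ = n * r := by rw [hn]; rfl
  -- r² = n⁴ + s
  set s : ℝ := ∑ j ∈ Finset.univ.erase i, ‖⟪ξ i, ξ j⟫_ℂ‖ ^ 2 with hs
  have hspos : 0 ≤ s := Finset.sum_nonneg fun j _ => by positivity
  have hterm : ∀ j, (star ((ξ i : Fin D → ℂ)) ⬝ᵥ (outer (ξ j) *ᵥ (ξ i : Fin D → ℂ)))
      = ((‖⟪ξ i, ξ j⟫_ℂ‖^2 : ℝ) : ℂ) := by
    intro j
    rw [outer_mulVec, dotProduct_smul, smul_eq_mul]
    have h1 : star ((ξ j : Fin D → ℂ)) ⬝ᵥ (ξ i : Fin D → ℂ) = ⟪ξ j, ξ i⟫_ℂ := (inner_ev_dot _ _).symm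
    have h2 : star ((ξ i : Fin D → ℂ)) ⬝ᵥ ((ξ j : Fin D → ℂ)) = ⟪ξ i, ξ j⟫_ℂ := (inner_ev_dot _ _).symm
    rw [h1, h2,
      show (⟪ξ j, ξ i⟫_ℂ) = (starRingEnd ℂ) ⟪ξ i, ξ j⟫_ℂ from (inner_conj_symm _ _).symm,
      ← Complex.normSq_eq_conj_mul_self, Complex.normSq_eq_norm_sq]
  have hrsq : r ^ 2 = n ^ 4 + s := by
    have h1 : star ((ξ i : Fin D → ℂ)) ⬝ᵥ (N *ᵥ (ξ i : Fin D → ℂ))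
        = star (S *ᵥ (ξ i : Fin D → ℂ)) ⬝ᵥ (S *ᵥ (ξ i : Fin D → ℂ)) := by
      rw [← hSS, ← Matrix.mulVec_mulVec, herm_move _ hS.isHermitian]
    have h2 : ((r : ℝ) : ℂ) ^ 2 = star ((ξ i : Fin D → ℂ)) ⬝ᵥ (N *ᵥ (ξ i : Fin D → ℂ)) := by
      rw [h1, ← inner_ev_dot, inner_self_eq_norm_sq_to_K, hr]; rfl
    have h3 : star ((ξ i : Fin D → ℂ)) ⬝ᵥ (N *ᵥ (ξ i : Fin D → ℂ))
        = ∑ j, ((‖⟪ξ i, ξ j⟫_ℂ‖^2 : ℝ) : ℂ) := by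
      rw [hN, matrix_sum_mulVec, dot_sum]
      exact Finset.sum_congr rfl fun j _ => hterm j
    have h5 : ‖⟪ξ i, ξ i⟫_ℂ‖^2 = n^4 := by
      have h6 : (⟪ξ i, ξ i⟫_ℂ) = ((n : ℂ)) ^ 2 := by
        rw [inner_self_eq_norm_sq_to_K, hn]; rfl
      rw [h6, norm_pow, Complex.norm_real, Real.norm_eq_abs, abs_of_nonneg hnpos.le]
      ring
    have h4 : ∑ j, ((‖⟪ξ i, ξ j⟫_ℂ‖^2 : ℝ) : ℂ) = ((n^4 + s : ℝ) : ℂ) := by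
      rw [← Finset.add_sum_erase _ _ (Finset.mem_univ i), h5, hs]
      push_cast [Complex.ofReal_sum]
      ring_nf
    have h6 := h2.trans (h3.trans h4)
    have h7 := congrArg Complex.re h6
    rw [← Complex.ofReal_pow, Complex.ofReal_re, Complex.ofReal_re] at h7
    exact h7
  -- final arithmetic
  clear_value n p q r s
  have key : n ^ 4 ≤ p ^ 4 * n ^ 2 + s := by
    have h1 : n ^ 4 ≤ p ^ 2 * q ^ 2 := by
      nlinarith [mul_self_le_mul_self (sq_nonneg n) hcs1]
    have h2 : q ^ 4 ≤ n ^ 2 * r ^ 2 := by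
      nlinarith [mul_self_le_mul_self (sq_nonneg q) hcs2]
    have e1 : n^4 * n^4 ≤ (p^2*q^2) * (p^2*q^2) :=
      mul_le_mul h1 h1 (by positivity) (by positivity)
    have e2 : p^4 * q^4 ≤ p^4 * (n^2*r^2) :=
      mul_le_mul_of_nonneg_left h2 (by positivity)
    have h3 : n ^ 8 ≤ p ^ 4 * n ^ 2 * r ^ 2 := by nlinarith [e1, e2]
    have h4 : n ^ 8 ≤ p ^ 4 * n ^ 2 * (n ^ 4 + s) := by rw [← hrsq]; exact h3
    nlinarith [h4, sq_nonneg s, pow_pos hnpos 4, hspos]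
  rw [hMval]
  rw [ge_iff_le, sub_le_iff_le_add, div_add_div _ _ (by positivity) (by positivity),
    le_div_iff₀ (by positivity)]
  nlinarith [key, pow_pos hnpos 2, pow_pos hnpos 4]
end

section
/- Let ξ_1, ..., ξ_m be vectors in ℂ^D whose span is all of ℂ^D, so that N := Σ_{i=1}^m ξ_i ξ_i† is positive definite. Let T be the m×m Gram matrix with entries T_{ij} = ⟨ξ_i, ξ_j⟩. Then T is positive semidefinite and its positive semidefinite square root satisfies (√T)_{ij} = ⟨ξ_i, N^{-1/2} ξ_j⟩ for all i, j, where N^{-1/2} is the inverse of the positive definite square root of N. -/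
open Matrix
open scoped InnerProductSpace ComplexOrder

/-- The positive semidefinite square root of a positive semidefinite matrix (the definition
removed from Mathlib, restored with its old meaning). -/
noncomputable def Matrix.PosSemidef.sqrt {n 𝕜 : Type*} [Fintype n] [DecidableEq n] [RCLike 𝕜]
    {A : Matrix n n 𝕜} (hA : A.PosSemidef) : Matrix n n 𝕜 :=
  hA.isHermitian.eigenvectorUnitary.1 * diagonal ((↑) ∘ (√·) ∘ hA.isHermitian.eigenvalues) *
  (star hA.isHermitian.eigenvectorUnitary : Matrix n n 𝕜)

section SqrtCompat
open scoped MatrixOrder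

lemma Matrix.PosSemidef.sqrt_eq_cfcSqrt {n : Type*} [Fintype n] [DecidableEq n]
    {A : Matrix n n ℂ} (hA : A.PosSemidef) : hA.sqrt = CFC.sqrt A := by
  rw [CFC.sqrt_eq_cfc, cfc_nnreal_eq_real _ A hA.nonneg, hA.1.cfc_eq]
  simp only [IsHermitian.cfc, Matrix.PosSemidef.sqrt]
  congr 3
  funext i
  simp [Real.coe_sqrt, Real.coe_toNNReal _ (hA.eigenvalues_nonneg i), max_eq_left (hA.eigenvalues_nonneg i)]

lemma Matrix.PosSemidef.posSemidef_sqrt {n : Type*} [Fintype n] [DecidableEq n]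
    {A : Matrix n n ℂ} (hA : A.PosSemidef) : hA.sqrt.PosSemidef := by
  rw [hA.sqrt_eq_cfcSqrt]
  exact (CFC.sqrt_nonneg A).posSemidef

lemma Matrix.PosSemidef.sqrt_mul_self {n : Type*} [Fintype n] [DecidableEq n]
    {A : Matrix n n ℂ} (hA : A.PosSemidef) : hA.sqrt * hA.sqrt = A := by
  rw [hA.sqrt_eq_cfcSqrt]
  exact CFC.sqrt_mul_sqrt_self A hA.nonneg

lemma Matrix.PosSemidef.eq_sqrt_of_sq_eq {n : Type*} [Fintype n] [DecidableEq n]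
    {A : Matrix n n ℂ} (hA : A.PosSemidef) {B : Matrix n n ℂ} (hB : B.PosSemidef)
    (hAB : A ^ 2 = B) : A = hB.sqrt := by
  rw [hB.sqrt_eq_cfcSqrt, eq_comm, CFC.sqrt_eq_iff B A hB.nonneg hA.nonneg, ← hAB, sq]

end SqrtCompat

/-- The square root of a positive definite matrix is positive definite. -/
lemma sqrt_posDef {n : Type*} [Fintype n] [DecidableEq n] {A : Matrix n n ℂ}
    (hA : A.PosDef) : hA.posSemidef.sqrt.PosDef := by
  refine hA.posSemidef.posSemidef_sqrt.posDef_iff_isUnit.mpr ?_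
  have h : IsUnit (hA.posSemidef.sqrt * hA.posSemidef.sqrt) :=
    by rw [hA.posSemidef.sqrt_mul_self]; exact hA.isUnit
  rw [isUnit_iff_isUnit_det, det_mul] at h
  exact (isUnit_iff_isUnit_det _).2 (isUnit_of_mul_isUnit_left h)

/-- For vectors `ξ_1, …, ξ_m` spanning `ℂ^D` with `N = Σ ξ_i ξ_i†` positive definite, the Gram
matrix `T` with `T_{ij} = ⟨ξ_i, ξ_j⟩` is positive semidefinite, and its positive semidefinite
square root satisfies `(√T)_{ij} = ⟨ξ_i, N^{-1/2} ξ_j⟩`. -/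
theorem gram_sqrt_entries
    (D m : ℕ) (ξ : Fin m → EuclideanSpace ℂ (Fin D))
    (hspan : Submodule.span ℂ (Set.range ξ) = ⊤)
    (N : Matrix (Fin D) (Fin D) ℂ) (hN : N = ∑ i, outer (ξ i))
    (hNpd : N.PosDef)
    (T : Matrix (Fin m) (Fin m) ℂ) (hT : T = Matrix.of fun i j => ⟪ξ i, ξ j⟫_ℂ) :
    ∃ hTpsd : T.PosSemidef, ∀ i j,
      hTpsd.sqrt i j =
        ⟪ξ i, (WithLp.toLp 2 (((hNpd.posSemidef.sqrt)⁻¹).mulVec (ξ j)) : EuclideanSpace ℂ (Fin D))⟫_ℂ := by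
  classical
  -- the D × m matrix whose columns are the ξᵢ
  set X : Matrix (Fin D) (Fin m) ℂ := Matrix.of fun a j => ξ j a with hX
  have hTX : T = Xᴴ * X := by
    subst hT
    ext i j
    simp [Matrix.mul_apply, PiLp.inner_apply, hX, conjTranspose_apply, RCLike.star_def,
      mul_comm]
  have hNX : N = X * Xᴴ := by
    subst hN
    ext a b
    simp [Matrix.mul_apply, Matrix.sum_apply, outer, hX, conjTranspose_apply]
  set R : Matrix (Fin D) (Fin D) ℂ := (hNpd.posSemidef.sqrt)⁻¹ with hR
  have hsqrtPD : hNpd.posSemidef.sqrt.PosDef := sqrt_posDef hNpd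
  have hRPD : R.PosDef := hsqrtPD.inv
  have hsqrtUnit : IsUnit hNpd.posSemidef.sqrt.det :=
    isUnit_iff_isUnit_det _ |>.1 hsqrtPD.isUnit
  have hRNR : R * N * R = 1 := by
    rw [← hNpd.posSemidef.sqrt_mul_self, hR]
    simp only [← Matrix.mul_assoc]
    rw [nonsing_inv_mul _ hsqrtUnit, one_mul, mul_nonsing_inv _ hsqrtUnit]
  set S : Matrix (Fin m) (Fin m) ℂ := Xᴴ * R * X with hS
  have hSpsd : S.PosSemidef := by
    have key : hRPD.posSemidef.sqrt * hRPD.posSemidef.sqrt = R :=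
      hRPD.posSemidef.sqrt_mul_self
    have : S = (hRPD.posSemidef.sqrt * X)ᴴ * (hRPD.posSemidef.sqrt * X) := by
      simp only [conjTranspose_mul, hRPD.posSemidef.posSemidef_sqrt.1.eq, hS,
        Matrix.mul_assoc]
      rw [← Matrix.mul_assoc hRPD.posSemidef.sqrt hRPD.posSemidef.sqrt X, key]
    rw [this]
    exact posSemidef_conjTranspose_mul_self _
  have hSsq : S ^ 2 = T := by
    rw [pow_two, hS, hTX]
    have h1 : R * (X * Xᴴ) * R = 1 := hNX ▸ hRNR
    calc Xᴴ * R * X * (Xᴴ * R * X) = Xᴴ * (R * (X * Xᴴ) * R) * X := by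
          simp only [Matrix.mul_assoc]
        _ = Xᴴ * X := by rw [h1, Matrix.mul_one]
  have hTpsd : T.PosSemidef := hTX ▸ posSemidef_conjTranspose_mul_self X
  refine ⟨hTpsd, fun i j => ?_⟩
  have hsqrt : S = hTpsd.sqrt := hSpsd.eq_sqrt_of_sq_eq hTpsd hSsq
  rw [← hsqrt]
  simp only [hS, Matrix.mul_apply, PiLp.inner_apply, RCLike.inner_apply, Matrix.mulVec,
    dotProduct, conjTranspose_apply, RCLike.star_def, hX, Matrix.of_apply,
    Finset.mul_sum, Finset.sum_mul]
  rw [Finset.sum_comm]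
  exact Finset.sum_congr rfl fun a _ => Finset.sum_congr rfl fun b _ => by ring
end

section
/- Let d ≥ 2, n ≥ 2, and let X_1, ..., X_{d^n} be independent real random variables, each exponentially distributed with rate 1. Let s be a positive integer with 128 s ≤ d^{n-1}. Then for every j' with 1 ≤ j' ≤ s, Pr( (Σ_{t=1}^{j'-1} X_t) / (Σ_{t=j'}^{d^n} X_t) > 1/(4d) ) ≤ 2 e^{-d^{n-1}/32}. -/
open MeasureTheory ProbabilityTheory

lemma exp_lintegral_expMeasure {c : ℝ} (hc : c < 1) :
    ∫⁻ x, ENNReal.ofReal (Real.exp (c * x)) ∂(expMeasure 1)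
      = ENNReal.ofReal ((1 - c)⁻¹) := by
  have h1c : 0 < 1 - c := by linarith
  have hexp : expMeasure 1 = volume.withDensity (exponentialPDF 1) := rfl
  have hm : Measurable (exponentialPDF 1) := (measurable_exponentialPDFReal 1).ennreal_ofReal
  rw [hexp, lintegral_withDensity_eq_lintegral_mul _ hm
    (by exact (measurable_const.mul measurable_id).exp.ennreal_ofReal)]
  have hpt : ∀ x : ℝ, (exponentialPDF 1 * fun x => ENNReal.ofReal (Real.exp (c * x))) x
      = ENNReal.ofReal ((1 - c)⁻¹) * exponentialPDF (1 - c) x := by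
    intro x
    simp only [Pi.mul_apply]
    rcases le_or_gt 0 x with hx | hx
    · rw [exponentialPDF_of_nonneg hx, exponentialPDF_of_nonneg hx,
        ← ENNReal.ofReal_mul (by positivity), ← ENNReal.ofReal_mul (by positivity)]
      congr 1
      rw [one_mul, ← Real.exp_add, inv_mul_cancel_left₀ h1c.ne']
      congr 1
      ring
    · rw [exponentialPDF_of_neg hx, exponentialPDF_of_neg hx, zero_mul, mul_zero]
  have hm2 : Measurable (exponentialPDF (1 - c)) :=
    (measurable_exponentialPDFReal (1 - c)).ennreal_ofReal
  rw [lintegral_congr hpt, lintegral_const_mul _ hm2,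
    lintegral_exponentialPDF_eq_one h1c, mul_one]

lemma exp_lintegral_pullback {Ω : Type*} [MeasurableSpace Ω] {μ : Measure Ω}
    {Y : Ω → ℝ} (hY : Measurable Y) (hlaw : μ.map Y = expMeasure 1)
    {c : ℝ} (hc : c < 1) :
    ∫⁻ ω, ENNReal.ofReal (Real.exp (c * Y ω)) ∂μ = ENNReal.ofReal ((1 - c)⁻¹) := by
  have := lintegral_map (f := fun x => ENNReal.ofReal (Real.exp (c * x)))
    (by exact (measurable_const.mul measurable_id).exp.ennreal_ofReal) hY (μ := μ)
  rw [hlaw] at this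
  rw [← this, exp_lintegral_expMeasure hc]

lemma integrable_exp_mul_of_expLaw {Ω : Type*} [MeasurableSpace Ω] {μ : Measure Ω}
    {Y : Ω → ℝ} (hY : Measurable Y) (hlaw : μ.map Y = expMeasure 1)
    {c : ℝ} (hc : c < 1) :
    Integrable (fun ω => Real.exp (c * Y ω)) μ := by
  refine ⟨((measurable_const.mul hY).exp).aestronglyMeasurable, ?_⟩
  rw [HasFiniteIntegral]
  have : ∀ ω, ‖Real.exp (c * Y ω)‖ₑ = ENNReal.ofReal (Real.exp (c * Y ω)) := by
    intro ω
    rw [← Real.enorm_eq_ofReal (Real.exp_pos _).le]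
  simp_rw [this, exp_lintegral_pullback hY hlaw hc]
  exact ENNReal.ofReal_lt_top

lemma mgf_of_expLaw {Ω : Type*} [MeasurableSpace Ω] {μ : Measure Ω}
    {Y : Ω → ℝ} (hY : Measurable Y) (hlaw : μ.map Y = expMeasure 1)
    {c : ℝ} (hc : c < 1) :
    mgf Y μ c = (1 - c)⁻¹ := by
  have h1c : (0:ℝ) < 1 - c := by linarith
  rw [mgf, integral_eq_lintegral_of_nonneg_ae (f := fun ω => Real.exp (c * Y ω)) (ae_of_all _ fun ω => (Real.exp_pos _).le)
    ((measurable_const.mul hY).exp).aestronglyMeasurable,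
    exp_lintegral_pullback hY hlaw hc, ENNReal.toReal_ofReal (by positivity)]


set_option maxHeartbeats 1000000 in
/-- For independent rate-1 exponential random variables `X_1, …, X_{d^n}` (with `d, n ≥ 2` and
`128 s ≤ d^{n-1}`), and any `1 ≤ j' ≤ s`:
`Pr((Σ_{t=1}^{j'-1} X_t)/(Σ_{t=j'}^{d^n} X_t) > 1/(4d)) ≤ 2 exp(-d^{n-1}/32)`.
Here `X_t` is indexed by `t : Fin (d^n)` representing `X_{t+1}`. -/
theorem exponential_ratio_bound
    (d n s : ℕ) (hd : 2 ≤ d) (hn : 2 ≤ n) (hs : 0 < s) (h128 : 128 * s ≤ d ^ (n - 1))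
    {Ω : Type*} [MeasurableSpace Ω] (Pr : Measure Ω) [IsProbabilityMeasure Pr]
    (X : Fin (d ^ n) → Ω → ℝ)
    (hmeas : ∀ t, Measurable (X t))
    (hindep : iIndepFun X Pr)
    (hlaw : ∀ t, Pr.map (X t) = expMeasure 1)
    (j' : ℕ) (hj1 : 1 ≤ j') (hjs : j' ≤ s) :
    Pr {ω | (1 : ℝ) / (4 * d) <
        (∑ t ∈ Finset.univ.filter (fun t : Fin (d ^ n) => (t : ℕ) + 1 < j'), X t ω) /
        (∑ t ∈ Finset.univ.filter (fun t : Fin (d ^ n) => j' ≤ (t : ℕ) + 1), X t ω)}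
      ≤ ENNReal.ofReal (2 * Real.exp (-(d : ℝ) ^ (n - 1) / 32)) := by
  classical
  set sA := Finset.univ.filter (fun t : Fin (d ^ n) => (t : ℕ) + 1 < j') with hsA
  set sB := Finset.univ.filter (fun t : Fin (d ^ n) => j' ≤ (t : ℕ) + 1) with hsB
  set K := sA.card with hK
  set M := sB.card with hMdef
  -- cardinalities
  have hcard : K + M = d ^ n := by
    have hBc : sB = Finset.univ.filter (fun t : Fin (d ^ n) => ¬((t : ℕ) + 1 < j')) := by
      apply Finset.filter_congr
      intro t _
      simp [not_lt]
    rw [hK, hMdef, hBc, Finset.card_filter_add_card_filter_not, Finset.card_univ,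
      Fintype.card_fin]
  have hKs : K ≤ s := by
    rw [hK]
    calc sA.card ≤ (Finset.range s).card := by
          refine Finset.card_le_card_of_injOn (fun t => (t : ℕ)) ?_ ?_
          · intro t ht
            rw [hsA, Finset.mem_coe, Finset.mem_filter] at ht
            simp only [Finset.mem_coe, Finset.mem_range]
            omega
          · intro a _ b _ hab
            exact Fin.val_injective hab
      _ = s := Finset.card_range s
  -- real-number setup
  set D1 : ℝ := (d : ℝ) ^ (n - 1) with hD1
  have hD1pos : (0 : ℝ) < D1 := by positivity
  have hd' : (2 : ℝ) ≤ d := by exact_mod_cast hd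
  have hd0 : (0 : ℝ) < d := by linarith
  have h128' : 128 * (s : ℝ) ≤ D1 := by
    rw [hD1]
    exact_mod_cast h128
  have hs' : (1 : ℝ) ≤ s := by exact_mod_cast hs
  have hKs' : (K : ℝ) ≤ s := by exact_mod_cast hKs
  have hMR : (M : ℝ) = (d : ℝ) * D1 - K := by
    have h1 : (K : ℝ) + M = (d : ℝ) ^ n := by exact_mod_cast hcard
    have h2 : (d : ℝ) ^ n = (d : ℝ) * D1 := by
      rw [hD1, ← pow_succ']
      congr 1
      omega
    linarith
  have hMD1 : D1 ≤ (M : ℝ) := by nlinarith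
  have hK0 : (0:ℝ) ≤ (K : ℝ) := Nat.cast_nonneg _
  have hlogpos : (0:ℝ) < Real.log 2 := Real.log_pos (by norm_num)
  have hlog2a : Real.log 2 < 0.6931471808 := Real.log_two_lt_d9
  have hlog2b : (0.6931471803 : ℝ) < Real.log 2 := Real.log_two_gt_d9
  set T : ℝ := (M : ℝ) / 2 with hT
  set a : ℝ := T / (4 * d) with ha
  set e1 : ℝ := Real.exp (-D1 / 32) with he1
  -- Chernoff for the numerator
  have mgfA : mgf (∑ i ∈ sA, X i) Pr (1/2) = 2 ^ K := by
    rw [hindep.mgf_sum hmeas]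
    rw [Finset.prod_congr rfl (fun i _ => mgf_of_expLaw (hmeas i) (hlaw i) (by norm_num))]
    rw [Finset.prod_const]
    norm_num
    rfl
  have intA : Integrable (fun ω => Real.exp ((1/2) * (∑ i ∈ sA, X i) ω)) Pr :=
    hindep.integrable_exp_mul_sum hmeas
      (fun i _ => integrable_exp_mul_of_expLaw (hmeas i) (hlaw i) (by norm_num))
  have chA := measure_ge_le_exp_mul_mgf (μ := Pr) (X := ∑ i ∈ sA, X i) a
    (by norm_num : (0:ℝ) ≤ 1/2) intA
  rw [mgfA] at chA
  -- Chernoff for the denominator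
  have mgfB : mgf (∑ i ∈ sB, X i) Pr (-1) = (2 : ℝ)⁻¹ ^ M := by
    rw [hindep.mgf_sum hmeas]
    rw [Finset.prod_congr rfl (fun i _ => mgf_of_expLaw (hmeas i) (hlaw i) (by norm_num))]
    rw [Finset.prod_const]
    norm_num
    rfl
  have intB : Integrable (fun ω => Real.exp ((-1) * (∑ i ∈ sB, X i) ω)) Pr :=
    hindep.integrable_exp_mul_sum hmeas
      (fun i _ => integrable_exp_mul_of_expLaw (hmeas i) (hlaw i) (by norm_num))
  have chB := measure_le_le_exp_mul_mgf (μ := Pr) (X := ∑ i ∈ sB, X i) T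
    (by norm_num : (-1:ℝ) ≤ 0) intB
  rw [mgfB] at chB
  simp only [Finset.sum_apply] at chA chB
  -- numeric bounds
  have numA : Real.exp (-(1/2) * a) * 2 ^ K ≤ e1 := by
    have h2K : (2 : ℝ) ^ K = Real.exp (K * Real.log 2) := by
      rw [Real.exp_nat_mul, Real.exp_log (by norm_num : (0:ℝ) < 2)]
    rw [h2K, ← Real.exp_add, he1, Real.exp_le_exp]
    have key : D1 / 32 + K * Real.log 2 ≤ (M : ℝ) / (16 * d) := by
      rw [le_div_iff₀ (by positivity)]
      nlinarith [mul_le_mul_of_nonneg_left h128' (by linarith : (0:ℝ) ≤ (d:ℝ)),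
        mul_le_mul_of_nonneg_left hKs' (by positivity : (0:ℝ) ≤ 16*(d:ℝ)*Real.log 2),
        mul_le_mul_of_nonneg_left hlog2a.le (by positivity : (0:ℝ) ≤ 16*(d:ℝ)*(s:ℝ)),
        mul_pos hd0 hD1pos, mul_nonneg hK0 hlogpos.le]
    have harw : -(1/2 : ℝ) * a = -((M : ℝ) / (16 * d)) := by
      rw [ha, hT]; ring
    rw [harw]
    linarith
  have numB : Real.exp (-(-1) * T) * (2 : ℝ)⁻¹ ^ M ≤ e1 := by
    have h2M : ((2 : ℝ)⁻¹) ^ M = Real.exp (-((M : ℝ) * Real.log 2)) := by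
      rw [show -((M : ℝ) * Real.log 2) = (M : ℝ) * Real.log 2⁻¹ by rw [Real.log_inv]; ring,
        Real.exp_nat_mul, Real.exp_log (by norm_num : (0:ℝ) < 2⁻¹)]
    rw [h2M, ← Real.exp_add, he1, Real.exp_le_exp, hT]
    nlinarith
  -- null set of negative values
  have hnull : Pr {ω | ¬ ∀ t, 0 ≤ X t ω} = 0 := by
    have hsub : {ω | ¬ ∀ t, 0 ≤ X t ω} ⊆ ⋃ t, X t ⁻¹' (Set.Iio 0) := by
      intro ω hω
      push_neg at hω
      obtain ⟨t, ht⟩ := hω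
      exact Set.mem_iUnion.mpr ⟨t, by simpa using ht⟩
    refine measure_mono_null hsub (measure_iUnion_null fun t => ?_)
    rw [← Measure.map_apply (hmeas t) measurableSet_Iio, hlaw t]
    have : expMeasure 1 = volume.withDensity (exponentialPDF 1) := rfl
    rw [this, withDensity_apply _ measurableSet_Iio]
    exact lintegral_exponentialPDF_of_nonpos le_rfl
  -- set inclusion
  have hincl : {ω | (1 : ℝ) / (4 * d) < (∑ t ∈ sA, X t ω) / (∑ t ∈ sB, X t ω)}
      ⊆ ({ω | a ≤ ∑ i ∈ sA, X i ω} ∪ {ω | ∑ i ∈ sB, X i ω ≤ T}) ∪ {ω | ¬ ∀ t, 0 ≤ X t ω} := by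
    intro ω hω
    by_cases hg : ∀ t, 0 ≤ X t ω
    · left
      by_cases hB : (∑ i ∈ sB, X i ω) ≤ T
      · right; exact hB
      · left
        push_neg at hB
        have hT0 : 0 < T := by rw [hT]; linarith
        have hDpos : 0 < ∑ i ∈ sB, X i ω := lt_trans hT0 hB
        have hω' : (1 : ℝ) / (4 * d) < (∑ t ∈ sA, X t ω) / (∑ t ∈ sB, X t ω) := hω
        rw [div_lt_div_iff₀ (by positivity) hDpos] at hω'
        show a ≤ ∑ i ∈ sA, X i ω
        rw [ha, div_le_iff₀ (by positivity : (0:ℝ) < 4 * (d:ℝ))]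
        nlinarith
    · right; exact hg
  -- combine
  calc Pr {ω | (1 : ℝ) / (4 * d) < (∑ t ∈ sA, X t ω) / (∑ t ∈ sB, X t ω)}
      ≤ Pr (({ω | a ≤ ∑ i ∈ sA, X i ω} ∪ {ω | ∑ i ∈ sB, X i ω ≤ T}) ∪ {ω | ¬ ∀ t, 0 ≤ X t ω}) :=
        measure_mono hincl
    _ ≤ Pr ({ω | a ≤ ∑ i ∈ sA, X i ω} ∪ {ω | ∑ i ∈ sB, X i ω ≤ T}) + Pr {ω | ¬ ∀ t, 0 ≤ X t ω} :=
        measure_union_le _ _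
    _ ≤ (Pr {ω | a ≤ ∑ i ∈ sA, X i ω} + Pr {ω | ∑ i ∈ sB, X i ω ≤ T}) + 0 := by
        rw [hnull]
        exact add_le_add_left (measure_union_le _ _) 0
    _ ≤ (ENNReal.ofReal e1 + ENNReal.ofReal e1) + 0 := by
        gcongr
        · rw [← ENNReal.ofReal_toReal (measure_ne_top Pr _)]
          exact ENNReal.ofReal_le_ofReal (chA.trans numA)
        · rw [← ENNReal.ofReal_toReal (measure_ne_top Pr _)]
          exact ENNReal.ofReal_le_ofReal (chB.trans numB)
    _ = ENNReal.ofReal (2 * Real.exp (-D1 / 32)) := by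
        rw [add_zero, ← ENNReal.ofReal_add (by positivity) (by positivity), he1]
        ring_nf
end
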